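/- Let 0 = ℓ₁ < ℓ₂ < ℓ₃ < r be integers with r - ℓ₃ = ℓ₃ - ℓ₂ and ℓ₃ - ℓ₂ ≠ ℓ₂. Then every {ℓ₁, ℓ₂, ℓ₃}-intersecting r-uniform hypergraph H on n vertices satisfies |H| ≤ C(n,2). -/

import Mathlib

open Finset


private def eSf {n : ℕ} (S : Finset (Fin n)) : Finset (Fin n) → ℚ :=
  fun B => if S ⊆ B then 1 else 0

private lemma choose_two_q (e : ℕ) : (e.choose 2 : ℚ) * 2 = e * (e - 1) := by
  induction e with
  | zero => simp
  | succ m ih =>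
    rw [Nat.choose_succ_succ]
    push_cast [Nat.choose_one_right]
    linear_combination ih

private lemma filter_powersetCard {n : ℕ} (k : ℕ) (A B : Finset (Fin n)) :
    (Finset.powersetCard k A).filter (fun S => S ⊆ B) = Finset.powersetCard k (A ∩ B) := by
  ext S
  simp only [Finset.mem_filter, Finset.mem_powersetCard, Finset.subset_inter_iff]
  tauto

private lemma sum_eS {n : ℕ} (k : ℕ) (A B : Finset (Fin n)) :
    (∑ S ∈ Finset.powersetCard k A, eSf S B) = ((A ∩ B).card.choose k : ℚ) := by
  simp only [eSf]
  rw [Finset.sum_boole, filter_powersetCard, Finset.card_powersetCard]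

private lemma f_mem_span {n : ℕ} (l₂ : ℕ) (A : Finset (Fin n)) :
    (fun B => ((A ∩ B).card : ℚ) * ((A ∩ B).card - l₂)) ∈
      Submodule.span ℚ {v : Finset (Fin n) → ℚ | ∃ S : Finset (Fin n), S.card ≤ 2 ∧ v = eSf S} := by
  have hcomb : (fun B => ((A ∩ B).card : ℚ) * ((A ∩ B).card - l₂)) =
      (∑ S ∈ Finset.powersetCard 1 A, ((1:ℚ) - l₂) • eSf S)
        + (∑ S ∈ Finset.powersetCard 2 A, (2:ℚ) • eSf S) := by
    funext B
    have h1 := sum_eS 1 A B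
    have h2 := sum_eS 2 A B
    simp only [Pi.add_apply, Finset.sum_apply, Pi.smul_apply, smul_eq_mul]
    rw [← Finset.mul_sum, ← Finset.mul_sum, h1, h2, Nat.choose_one_right]
    have := choose_two_q (A ∩ B).card
    linear_combination -this
  rw [hcomb]
  apply Submodule.add_mem <;>
  · apply Submodule.sum_mem
    intro S hS
    apply Submodule.smul_mem
    apply Submodule.subset_span
    exact ⟨S, by rw [Finset.mem_powersetCard] at hS; omega, rfl⟩



private lemma g_mem_span {n : ℕ} (r : ℕ) (I : Finset (Fin n)) (hI : I.card ≤ 1) :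
    (fun B : Finset (Fin n) => (if I ⊆ B then (1:ℚ) else 0) * ((B.card : ℚ) - r)) ∈
      Submodule.span ℚ {v : Finset (Fin n) → ℚ | ∃ S : Finset (Fin n), S.card ≤ 2 ∧ v = eSf S} := by
  have hcomb : (fun B : Finset (Fin n) => (if I ⊆ B then (1:ℚ) else 0) * ((B.card : ℚ) - r)) =
      (∑ j : Fin n, eSf (insert j I)) - (r:ℚ) • eSf I := by
    funext B
    simp only [Pi.sub_apply, Finset.sum_apply, Pi.smul_apply, smul_eq_mul]
    by_cases hIB : I ⊆ B
    · simp only [eSf, hIB, if_true, Finset.insert_subset_iff, hIB, and_true]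
      rw [Finset.sum_boole]
      have : Finset.univ.filter (fun j => j ∈ B) = B := by
        ext j; simp
      rw [this]
      ring
    · simp only [eSf, hIB, if_false, Finset.insert_subset_iff, hIB, and_false, if_false]
      simp
  rw [hcomb]
  apply Submodule.sub_mem
  · apply Submodule.sum_mem
    intro j _
    apply Submodule.subset_span
    exact ⟨insert j I, le_trans (Finset.card_insert_le j I) (by omega), rfl⟩
  · apply Submodule.smul_mem
    apply Submodule.subset_span
    exact ⟨I, by omega, rfl⟩

private lemma count_card_le (n k : ℕ) :
    (Finset.univ.filter (fun S : Finset (Fin n) => S.card ≤ k)).card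
      = ∑ j ∈ Finset.range (k+1), n.choose j := by
  have hU : Finset.univ.filter (fun S : Finset (Fin n) => S.card ≤ k)
      = (Finset.range (k+1)).biUnion (fun j => Finset.powersetCard j Finset.univ) := by
    ext S
    simp only [Finset.mem_filter, Finset.mem_univ, true_and, Finset.mem_biUnion,
      Finset.mem_range, Finset.mem_powersetCard, Finset.subset_univ, Nat.lt_succ_iff]
    exact ⟨fun h => ⟨S.card, h, rfl⟩, fun ⟨j, hj, he⟩ => he ▸ hj⟩
  rw [hU, Finset.card_biUnion]
  · apply Finset.sum_congr rfl
    intro j _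
    rw [Finset.card_powersetCard, Finset.card_univ, Fintype.card_fin]
  · intro a _ b _ hab
    rw [Function.onFun, Finset.disjoint_left]
    intro S hSa hSb
    rw [Finset.mem_powersetCard] at hSa hSb
    exact hab (hSa.2 ▸ hSb.2 ▸ rfl)


lemma exists_prime_pow (l₂ l₃ r : ℕ) (h1 : 0 < l₂) (h2 : l₂ < l₃) (h3 : l₃ < r)
    (hAP : r - l₃ = l₃ - l₂) (hne : l₃ - l₂ ≠ l₂) :
    ∃ p α : ℕ, p.Prime ∧ ¬ p^(α+1) ∣ r*(r-l₂) ∧ p^(α+1) ∣ l₃*(l₃-l₂) := by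
  have hr2 : r + l₂ = 2 * l₃ := by omega
  have hndvd : ¬ l₃ ∣ 2*r := by
    rintro ⟨k, hk⟩
    have hk3 : k = 3 := by
      have ha : 2*l₃ < 2*r := by omega
      have hb : 2*r < 4*l₃ := by omega
      rw [hk] at ha hb
      have ha' : l₃ * 2 < l₃ * k := by omega
      have hb' : l₃ * k < l₃ * 4 := by omega
      have := Nat.lt_of_mul_lt_mul_left ha'
      have := Nat.lt_of_mul_lt_mul_left hb'
      omega
    subst hk3
    omega
  have hl₃ : l₃ ≠ 0 := by omega
  have h2r : 2*r ≠ 0 := by omega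
  rw [← Nat.factorization_le_iff_dvd hl₃ h2r, Finsupp.le_def] at hndvd
  push_neg at hndvd
  obtain ⟨p, hplt⟩ := hndvd
  have hp : p.Prime := by
    have hmem : p ∈ l₃.factorization.support := by
      rw [Finsupp.mem_support_iff]; omega
    rw [Nat.support_factorization] at hmem
    exact Nat.prime_of_mem_primeFactors hmem
  refine ⟨p, (r*(r-l₂)).factorization p, hp,
    Nat.pow_succ_factorization_not_dvd (Nat.mul_ne_zero (by omega) (by omega)) hp, ?_⟩
  rw [hp.pow_dvd_iff_le_factorization (Nat.mul_ne_zero hl₃ (by omega))]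
  have e1 : (r*(r-l₂)).factorization p = r.factorization p + (r-l₂).factorization p := by
    rw [Nat.factorization_mul (by omega) (by omega)]; simp
  have e2 : (l₃*(l₃-l₂)).factorization p = l₃.factorization p + (l₃-l₂).factorization p := by
    rw [Nat.factorization_mul hl₃ (by omega)]; simp
  have e3 : r - l₂ = 2*(l₃ - l₂) := by omega
  have e4 : (r-l₂).factorization p = (2:ℕ).factorization p + (l₃-l₂).factorization p := by
    rw [e3, Nat.factorization_mul two_ne_zero (by omega)]; simp
  have e5 : (2*r).factorization p = (2:ℕ).factorization p + r.factorization p := by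
    rw [Nat.factorization_mul two_ne_zero (by omega)]; simp
  omega

private lemma indep_lemma {n l₂ l₃ r p α : ℕ} (hp : p.Prime)
    (h1 : 0 < l₂) (h2 : l₂ < l₃) (h3 : l₃ < r)
    (hnd : ¬ p^(α+1) ∣ r*(r - l₂)) (hdvd : p^(α+1) ∣ l₃*(l₃ - l₂))
    (H : Finset (Finset (Fin n)))
    (huniform : ∀ A ∈ H, A.card = r)
    (hinter : ∀ A ∈ H, ∀ B ∈ H, A ≠ B → (A ∩ B).card ∈ ({0, l₂, l₃} : Finset ℕ)) :
    LinearIndependent ℚ (Sum.elim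
      (fun A : {A // A ∈ H} => fun B : Finset (Fin n) =>
        ((A.1 ∩ B).card : ℚ) * (((A.1 ∩ B).card : ℚ) - l₂))
      (fun I : {I : Finset (Fin n) // I.card ≤ 1} => fun B : Finset (Fin n) =>
        (if I.1 ⊆ B then (1:ℚ) else 0) * ((B.card : ℚ) - r))) := by
  rw [Fintype.linearIndependent_iff]
  intro c hc
  have heval : ∀ B : Finset (Fin n),
      (∑ A : {A // A ∈ H}, c (Sum.inl A) *
        (((A.1 ∩ B).card : ℚ) * (((A.1 ∩ B).card : ℚ) - l₂)))
      + (∑ I : {I : Finset (Fin n) // I.card ≤ 1}, c (Sum.inr I) *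
        ((if I.1 ⊆ B then (1:ℚ) else 0) * ((B.card : ℚ) - r))) = 0 := by
    intro B
    have h0 := congrFun hc B
    simpa [Fintype.sum_sum_type, Finset.sum_apply] using h0
  -- Step A : the f-coefficients vanish
  have hA : ∀ A : {A // A ∈ H}, c (Sum.inl A) = 0 := by
    by_contra hcon
    push_neg at hcon
    obtain ⟨A₀, hA₀⟩ := hcon
    set lam : {A // A ∈ H} → ℚ := fun A => c (Sum.inl A) with hlam
    have hrel : ∀ B : {A // A ∈ H},
        ∑ A : {A // A ∈ H}, lam A *
          (((A.1 ∩ B.1).card : ℚ) * (((A.1 ∩ B.1).card : ℚ) - l₂)) = 0 := by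
      intro B
      have h := heval B.1
      have hz : ∑ I : {I : Finset (Fin n) // I.card ≤ 1}, c (Sum.inr I) *
          ((if I.1 ⊆ B.1 then (1:ℚ) else 0) * ((B.1.card : ℚ) - r)) = 0 := by
        apply Finset.sum_eq_zero
        intro I _
        rw [huniform B.1 B.2]
        simp
      rw [hz] at h
      simpa using h
    -- clear denominators
    set N : ℕ := ∏ A : {A // A ∈ H}, (lam A).den with hN
    have hNne : (N:ℚ) ≠ 0 := by
      have : 0 < N := Finset.prod_pos (fun A _ => (lam A).pos)
      exact_mod_cast this.ne'
    have hint : ∀ A : {A // A ∈ H}, ∃ z : ℤ, (z : ℚ) = N * lam A := by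
      intro A
      obtain ⟨m, hm⟩ := Finset.dvd_prod_of_mem (fun A => (lam A).den) (Finset.mem_univ A)
      refine ⟨(lam A).num * m, ?_⟩
      rw [← hN] at hm
      have key : (lam A) * ((lam A).den : ℚ) = (lam A).num := Rat.mul_den_eq_num _
      rw [hm]
      push_cast
      rw [← key]
      ring
    choose ν hν using hint
    have hν0 : ν A₀ ≠ 0 := by
      intro h
      have h' := hν A₀
      rw [h] at h'
      have : lam A₀ = 0 := by
        rcases mul_eq_zero.mp h'.symm with h'' | h''
        · exact absurd h'' hNne
        · exact h''
      exact hA₀ this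
    -- divide by the gcd
    set g : ℤ := Finset.gcd Finset.univ ν with hg
    have hg0 : g ≠ 0 := by
      intro h
      exact hν0 (Finset.gcd_eq_zero_iff.mp (hg ▸ h) A₀ (Finset.mem_univ _))
    have hgd : ∀ A : {A // A ∈ H}, ∃ t : ℤ, ν A = g * t :=
      fun A => Finset.gcd_dvd (Finset.mem_univ A)
    choose μ hμ using hgd
    have hgQ : (g:ℚ) ≠ 0 := by exact_mod_cast hg0
    -- some μ is not divisible by p
    have hex : ∃ A₁ : {A // A ∈ H}, ¬ (p:ℤ) ∣ μ A₁ := by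
      by_contra hall
      push_neg at hall
      have hdgd : g * p ∣ g := by
        apply Finset.dvd_gcd
        intro A _
        obtain ⟨t, ht⟩ := hall A
        exact ⟨t, by rw [hμ A, ht]; ring⟩
      obtain ⟨t, ht⟩ := hdgd
      have h2' : (1:ℤ) = p * t := mul_left_cancel₀ hg0 (by linear_combination ht)
      have : (p:ℤ) ∣ 1 := ⟨t, h2'⟩
      have hple : p ∣ 1 := by exact_mod_cast this
      exact hp.one_lt.ne' (Nat.dvd_one.mp hple)
    obtain ⟨A₁, hA₁⟩ := hex
    -- integer relation at B = A₁
    have hrelZ : ∑ A : {A // A ∈ H}, μ A *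
        (((A.1 ∩ A₁.1).card : ℤ) * (((A.1 ∩ A₁.1).card : ℤ) - l₂)) = 0 := by
      have h := hrel A₁
      have h2' : ∑ A : {A // A ∈ H}, (ν A : ℚ) *
          (((A.1 ∩ A₁.1).card : ℚ) * (((A.1 ∩ A₁.1).card : ℚ) - l₂)) = 0 := by
        calc ∑ A : {A // A ∈ H}, (ν A : ℚ) *
              (((A.1 ∩ A₁.1).card : ℚ) * (((A.1 ∩ A₁.1).card : ℚ) - l₂))
            = (N:ℚ) * ∑ A : {A // A ∈ H}, lam A *
              (((A.1 ∩ A₁.1).card : ℚ) * (((A.1 ∩ A₁.1).card : ℚ) - l₂)) := by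
              rw [Finset.mul_sum]
              apply Finset.sum_congr rfl
              intro A _
              rw [hν A]; ring
          _ = 0 := by rw [h, mul_zero]
      have h3' : ∑ A : {A // A ∈ H}, (μ A : ℚ) *
          (((A.1 ∩ A₁.1).card : ℚ) * (((A.1 ∩ A₁.1).card : ℚ) - l₂)) = 0 := by
        have hgmul : (g:ℚ) * ∑ A : {A // A ∈ H}, (μ A : ℚ) *
            (((A.1 ∩ A₁.1).card : ℚ) * (((A.1 ∩ A₁.1).card : ℚ) - l₂)) = 0 := by
          rw [Finset.mul_sum]
          rw [← h2']
          apply Finset.sum_congr rfl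
          intro A _
          rw [hμ A]
          push_cast
          ring
        rcases mul_eq_zero.mp hgmul with h'' | h''
        · exact absurd h'' hgQ
        · exact h''
      have h4' : ((∑ A : {A // A ∈ H}, μ A *
          (((A.1 ∩ A₁.1).card : ℤ) * (((A.1 ∩ A₁.1).card : ℤ) - l₂)) : ℤ) : ℚ) = 0 := by
        push_cast
        exact h3'
      exact_mod_cast h4'
    -- off-diagonal divisibility
    have hoff : ∀ A : {A // A ∈ H}, A ≠ A₁ →
        ((p:ℤ))^(α+1) ∣ (((A.1 ∩ A₁.1).card : ℤ) * (((A.1 ∩ A₁.1).card : ℤ) - l₂)) := by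
      intro A hne'
      have hmem := hinter A.1 A.2 A₁.1 A₁.2 (fun h => hne' (Subtype.ext h))
      simp only [Finset.mem_insert, Finset.mem_singleton] at hmem
      rcases hmem with h0 | h0 | h0 <;> rw [h0]
      · simp
      · simp
      · have hcast : ((l₃:ℤ) * ((l₃:ℤ) - l₂)) = ((l₃*(l₃-l₂) : ℕ) : ℤ) := by
          push_cast [Nat.cast_sub h2.le]
          ring
        rw [hcast]
        exact_mod_cast hdvd
    -- diagonal value
    have hdiag : ((A₁.1 ∩ A₁.1).card : ℤ) * (((A₁.1 ∩ A₁.1).card : ℤ) - l₂)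
        = ((r*(r-l₂) : ℕ) : ℤ) := by
      rw [Finset.inter_self, huniform A₁.1 A₁.2]
      push_cast [Nat.cast_sub (h2.le.trans h3.le)]
      ring
    have hsum' : μ A₁ * ((r*(r-l₂):ℕ):ℤ) =
        - ∑ A ∈ Finset.univ.erase A₁, μ A *
          (((A.1 ∩ A₁.1).card : ℤ) * (((A.1 ∩ A₁.1).card : ℤ) - l₂)) := by
      have hsplit := Finset.sum_erase_add Finset.univ (fun A : {A // A ∈ H} => μ A *
          (((A.1 ∩ A₁.1).card : ℤ) * (((A.1 ∩ A₁.1).card : ℤ) - l₂))) (Finset.mem_univ A₁)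
      rw [hrelZ, hdiag] at hsplit
      linarith [hsplit]
    have hdvd2 : (p:ℤ)^(α+1) ∣ μ A₁ * ((r*(r-l₂):ℕ):ℤ) := by
      rw [hsum', dvd_neg]
      apply Finset.dvd_sum
      intro A hAe
      exact Dvd.dvd.mul_left (hoff A (Finset.ne_of_mem_erase hAe)) _
    have h5 : p^(α+1) ∣ (μ A₁).natAbs * (r*(r-l₂)) := by
      have := Int.natAbs_dvd_natAbs.mpr hdvd2
      simpa [Int.natAbs_mul, Int.natAbs_pow] using this
    have hpnd : ¬ p ∣ (μ A₁).natAbs := by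
      intro hdd
      apply hA₁
      have : (p:ℤ) ∣ ((μ A₁).natAbs : ℤ) := Int.natCast_dvd_natCast.mpr hdd
      exact this.trans (Int.natAbs_dvd.mpr dvd_rfl)
    have hcop : Nat.Coprime (p^(α+1)) (μ A₁).natAbs :=
      Nat.Coprime.pow_left _ ((Nat.Prime.coprime_iff_not_dvd hp).mpr hpnd)
    exact hnd (Nat.Coprime.dvd_of_dvd_mul_left hcop h5)
  -- Step B : the g-coefficients vanish
  have hgsum : ∀ B : Finset (Fin n),
      ∑ I : {I : Finset (Fin n) // I.card ≤ 1}, c (Sum.inr I) *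
        ((if I.1 ⊆ B then (1:ℚ) else 0) * ((B.card : ℚ) - r)) = 0 := by
    intro B
    have h := heval B
    have hz : ∑ A : {A // A ∈ H}, c (Sum.inl A) *
        (((A.1 ∩ B).card : ℚ) * (((A.1 ∩ B).card : ℚ) - l₂)) = 0 := by
      apply Finset.sum_eq_zero
      intro A _
      rw [hA A]
      ring
    rw [hz] at h
    simpa using h
  have hrne : ((r:ℚ)) ≠ 0 := by
    have : 0 < r := by omega
    exact_mod_cast this.ne'
  have hemp : (∅ : Finset (Fin n)).card ≤ 1 := by simp
  have hz1 : c (Sum.inr ⟨∅, hemp⟩) = 0 := by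
    have h := hgsum ∅
    rw [Finset.sum_eq_single (⟨∅, hemp⟩ : {I : Finset (Fin n) // I.card ≤ 1})] at h
    · simp only [Finset.card_empty, Nat.cast_zero, Finset.empty_subset, if_true] at h
      have : (0:ℚ) - r ≠ 0 := by
        intro hh
        apply hrne
        linarith
      rcases mul_eq_zero.mp h with h' | h'
      · exact h'
      · rcases mul_eq_zero.mp h' with h'' | h''
        · norm_num at h''
        · exact absurd h'' this
    · intro I _ hne'
      have hns : ¬ (I.1 ⊆ ∅) := by
        intro hsub
        exact hne' (Subtype.ext (Finset.subset_empty.mp hsub))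
      simp [hns]
    · intro h'
      exact absurd (Finset.mem_univ _) h'
  have hz2 : ∀ i : Fin n, c (Sum.inr ⟨{i}, by simp⟩) = 0 := by
    intro i
    have h := hgsum {i}
    rw [Finset.sum_eq_single (⟨{i}, by simp⟩ : {I : Finset (Fin n) // I.card ≤ 1})] at h
    · simp only [Finset.card_singleton, Nat.cast_one, Finset.Subset.refl, if_true] at h
      have hone : (1:ℚ) - r ≠ 0 := by
        have : (2:ℕ) ≤ r := by omega
        have : (2:ℚ) ≤ r := by exact_mod_cast this
        intro hh
        linarith
      rcases mul_eq_zero.mp h with h' | h'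
      · exact h'
      · rcases mul_eq_zero.mp h' with h'' | h''
        · norm_num at h''
        · exact absurd h'' hone
    · intro I _ hne'
      by_cases hsub : I.1 ⊆ {i}
      · rcases Finset.subset_singleton_iff.mp hsub with h0 | h0
        · have : I = ⟨∅, hemp⟩ := Subtype.ext h0
          rw [this, hz1]
          ring
        · exact absurd (Subtype.ext h0) hne'
      · simp [hsub]
    · intro h'
      exact absurd (Finset.mem_univ _) h'
  rintro (A | ⟨I, hI⟩)
  · exact hA A
  · rcases Nat.le_one_iff_eq_zero_or_eq_one.mp hI with h0 | h0
    · have : I = ∅ := Finset.card_eq_zero.mp h0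
      subst this
      exact hz1
    · obtain ⟨a, ha⟩ := Finset.card_eq_one.mp h0
      subst ha
      exact hz2 a

/-- If `0 = ℓ₁ < ℓ₂ < ℓ₃ < r` with `r - ℓ₃ = ℓ₃ - ℓ₂` and `ℓ₃ - ℓ₂ ≠ ℓ₂`, then every
`{ℓ₁, ℓ₂, ℓ₃}`-intersecting `r`-uniform hypergraph on `n` vertices has at most `C(n,2)`
edges. -/
theorem L_intersecting_three_bound (l₂ l₃ r n : ℕ)
    (h1 : 0 < l₂) (h2 : l₂ < l₃) (h3 : l₃ < r)
    (hAP : r - l₃ = l₃ - l₂) (hne : l₃ - l₂ ≠ l₂)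
    (H : Finset (Finset (Fin n)))
    (huniform : ∀ A ∈ H, A.card = r)
    (hinter : ∀ A ∈ H, ∀ B ∈ H, A ≠ B →
      (A ∩ B).card ∈ ({0, l₂, l₃} : Finset ℕ)) :
    H.card ≤ n.choose 2 := by
  obtain ⟨p, α, hp, hnd, hdvd⟩ := exists_prime_pow l₂ l₃ r h1 h2 h3 hAP hne
  have hli := indep_lemma hp h1 h2 h3 hnd hdvd H huniform hinter
  set SP := Submodule.span ℚ
    {v : Finset (Fin n) → ℚ | ∃ S : Finset (Fin n), S.card ≤ 2 ∧ v = eSf S} with hSP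
  have hmem : ∀ i : {A // A ∈ H} ⊕ {I : Finset (Fin n) // I.card ≤ 1},
      Sum.elim
        (fun A : {A // A ∈ H} => fun B : Finset (Fin n) =>
          ((A.1 ∩ B).card : ℚ) * (((A.1 ∩ B).card : ℚ) - l₂))
        (fun I : {I : Finset (Fin n) // I.card ≤ 1} => fun B : Finset (Fin n) =>
          (if I.1 ⊆ B then (1:ℚ) else 0) * ((B.card : ℚ) - r)) i ∈ SP := by
    rintro (A | I)
    · exact f_mem_span l₂ A.1
    · exact g_mem_span r I.1 I.2
  let F' : {A // A ∈ H} ⊕ {I : Finset (Fin n) // I.card ≤ 1} → SP := fun i => ⟨_, hmem i⟩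
  have hli' : LinearIndependent ℚ F' := by
    apply LinearIndependent.of_comp SP.subtype
    exact hli
  have hcard := hli'.fintype_card_le_finrank
  rw [Fintype.card_sum, Fintype.card_coe, Fintype.card_subtype] at hcard
  have hES : {v : Finset (Fin n) → ℚ | ∃ S : Finset (Fin n), S.card ≤ 2 ∧ v = eSf S}
      = ↑((Finset.univ.filter (fun S : Finset (Fin n) => S.card ≤ 2)).image eSf) := by
    ext v
    simp only [Set.mem_setOf_eq, Finset.coe_image, Set.mem_image, Finset.mem_coe,
      Finset.mem_filter, Finset.mem_univ, true_and]
    constructor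
    · rintro ⟨S, hS, rfl⟩; exact ⟨S, hS, rfl⟩
    · rintro ⟨S, hS, rfl⟩; exact ⟨S, hS, rfl⟩
  have hrk : Module.finrank ℚ SP ≤
      ((Finset.univ.filter (fun S : Finset (Fin n) => S.card ≤ 2)).image eSf).card := by
    rw [hSP, hES]
    exact finrank_span_finset_le_card _
  have hrk2 : ((Finset.univ.filter (fun S : Finset (Fin n) => S.card ≤ 2)).image eSf).card
      ≤ (Finset.univ.filter (fun S : Finset (Fin n) => S.card ≤ 2)).card :=
    Finset.card_image_le
  have hc1 := count_card_le n 1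
  have hc2 := count_card_le n 2
  simp only [Finset.sum_range_succ, Finset.sum_range_zero, zero_add] at hc1 hc2
  have hch0 : n.choose 0 = 1 := Nat.choose_zero_right n
  have hch1 : n.choose 1 = n := Nat.choose_one_right n
  omega
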